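/- For every convex tree T with maximal element P_T, the union ⋃_{P∈T} P equals the union of the upper tile (P_T)_u, the lower tile (P_T)_d, the lower tiles P_d for P ∈ T_u, and the upper tiles P_u for P ∈ T_d, and all tiles listed in this union are pairwise disjoint. -/

import Mathlib

open MeasureTheory Set ENNReal NNReal

noncomputable section

namespace Quartile

/-- The Walsh functions on `[0,1)` (extended by zero), in Walsh-Paley order,
defined by the recursion `W_{2l} = W_l(2x) + W_l(2x-1)`, `W_{2l+1} = W_l(2x) - W_l(2x-1)`. -/
def walsh (n : ℕ) (x : ℝ) : ℝ :=
  if h : n = 0 then (if 0 ≤ x ∧ x < 1 then 1 else 0)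
  else if n % 2 = 0 then walsh (n / 2) (2 * x) + walsh (n / 2) (2 * x - 1)
  else walsh (n / 2) (2 * x) - walsh (n / 2) (2 * x - 1)
termination_by n
decreasing_by
  all_goals exact Nat.div_lt_self (Nat.pos_of_ne_zero h) one_lt_two

/-- The dyadic interval `[2^k n, 2^k (n+1)) ⊆ [0,∞)`. -/
def dyadicI (k : ℤ) (n : ℕ) : Set ℝ := Ico ((2:ℝ)^k * n) ((2:ℝ)^k * (n+1))

/-- A tile: the dyadic rectangle `[2^k n, 2^k(n+1)) × [2^{-k} l, 2^{-k}(l+1))` of area one. -/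
structure Tile where
  k : ℤ
  n : ℕ
  l : ℕ

namespace Tile

/-- The time interval `I_p` of a tile. -/
def timeI (p : Tile) : Set ℝ := Ico ((2:ℝ)^p.k * p.n) ((2:ℝ)^p.k * (p.n+1))

/-- The frequency interval `ω_p` of a tile. -/
def freqI (p : Tile) : Set ℝ := Ico ((2:ℝ)^(-p.k) * p.l) ((2:ℝ)^(-p.k) * (p.l+1))

/-- The tile as a subset of the phase plane. -/
def toSet (p : Tile) : Set (ℝ × ℝ) := p.timeI ×ˢ p.freqI

/-- The Walsh wave packet `w_p` of a tile, `L²`-normalized. -/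
def wp (p : Tile) (x : ℝ) : ℝ :=
  Real.sqrt ((2:ℝ)^(-p.k)) * walsh p.l ((2:ℝ)^(-p.k) * x - p.n)

end Tile

/-- The order on dyadic rectangles: `p ≤ q` iff `I_p ⊆ I_q` and `ω_q ⊆ ω_p`, for tiles. -/
def tileLE (p q : Tile) : Prop := p.timeI ⊆ q.timeI ∧ q.freqI ⊆ p.freqI

/-- The inner product `⟨f, w_p⟩` of a function with a (real valued) wave packet. -/
def coef (f : ℝ → ℂ) (p : Tile) : ℂ := ∫ x, f x * (p.wp x : ℂ)

/-- The rank one projection `Π_p f = ⟨f, w_p⟩ w_p` associated to a single tile. -/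
def projT (p : Tile) (f : ℝ → ℂ) (x : ℝ) : ℂ := coef f p * (p.wp x : ℂ)

/-- The projection associated to a collection of (pairwise disjoint) tiles. -/
def projSet (𝔭 : Set Tile) (f : ℝ → ℂ) (x : ℝ) : ℂ := ∑' p : 𝔭, projT p f x

/-- The maximal tiles contained in a subset `S` of the phase plane; when `S` is a disjoint
union of tiles (of the kind appearing below) these form the canonical tiling of `S`. -/
def maxTiles (S : Set (ℝ × ℝ)) : Set Tile :=
  {p | p.toSet ⊆ S ∧ ∀ q : Tile, q.toSet ⊆ S → tileLE p q → q = p}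

/-- The phase plane projection `Π_S` associated to a subset `S` of the phase plane,
computed with the canonical tiling of `S` by maximal tiles (the projection is independent
of the chosen tiling). -/
def piProj (S : Set (ℝ × ℝ)) (f : ℝ → ℂ) (x : ℝ) : ℂ := projSet (maxTiles S) f x

/-- A bitile: the dyadic rectangle `[2^k n, 2^k(n+1)) × [2^{1-k} l, 2^{1-k}(l+1))` of area two. -/
structure Bitile where
  k : ℤ
  n : ℕ
  l : ℕ

namespace Bitile

/-- The time interval `I_P` of a bitile. -/
def timeI (P : Bitile) : Set ℝ := Ico ((2:ℝ)^P.k * P.n) ((2:ℝ)^P.k * (P.n+1))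

/-- The frequency interval `ω_P` of a bitile. -/
def freqI (P : Bitile) : Set ℝ := Ico ((2:ℝ)^(1-P.k) * P.l) ((2:ℝ)^(1-P.k) * (P.l+1))

/-- The bitile as a subset of the phase plane. -/
def toSet (P : Bitile) : Set (ℝ × ℝ) := P.timeI ×ˢ P.freqI

/-- The lower tile `P_d` of a bitile. -/
def d (P : Bitile) : Tile := ⟨P.k, P.n, 2*P.l⟩

/-- The upper tile `P_u` of a bitile. -/
def u (P : Bitile) : Tile := ⟨P.k, P.n, 2*P.l+1⟩

/-- The left tile of a bitile. -/
def left (P : Bitile) : Tile := ⟨P.k-1, 2*P.n, P.l⟩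

/-- The right tile of a bitile. -/
def right (P : Bitile) : Tile := ⟨P.k-1, 2*P.n+1, P.l⟩

/-- The `L^∞`-normalized wave packet `φ_{P_d} = |I_P|^{1/2} w_{P_d}`. -/
def phid (P : Bitile) (x : ℝ) : ℝ := Real.sqrt ((2:ℝ)^P.k) * P.d.wp x

end Bitile

/-- The order on dyadic rectangles, for bitiles. -/
def bitileLE (P Q : Bitile) : Prop := P.timeI ⊆ Q.timeI ∧ Q.freqI ⊆ P.freqI

/-- Strict order on bitiles. -/
def bitileLT (P Q : Bitile) : Prop := bitileLE P Q ∧ P ≠ Q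

/-- A collection of bitiles is convex if together with `P₁ < P < P₂` for `P₁, P₂` in the
collection it contains `P`. -/
def IsConvex (PP : Set Bitile) : Prop :=
  ∀ P1 P2 P : Bitile, P1 ∈ PP → P2 ∈ PP → bitileLT P1 P → bitileLT P P2 → P ∈ PP

/-- A tree: a collection of bitiles with a (unique) maximal element `P_T = I_T × ω_T`. -/
structure Tree where
  carrier : Set Bitile
  top : Bitile
  top_mem : top ∈ carrier
  le_top : ∀ P ∈ carrier, bitileLE P top

namespace Tree

/-- `T_d`: those bitiles of the tree whose lower tile frequency interval contains `ω_T`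
(in the paper's notation, `P_T ≤ P_d`). -/
def Td (T : Tree) : Set Bitile := {P | P ∈ T.carrier ∧ T.top.freqI ⊆ P.d.freqI}

/-- `T_u`: those bitiles of the tree whose upper tile frequency interval contains `ω_T`
(in the paper's notation, `P_T ≤ P_u`). -/
def Tu (T : Tree) : Set Bitile := {P | P ∈ T.carrier ∧ T.top.freqI ⊆ P.u.freqI}

/-- The region `⋃_{P ∈ T} P` of the phase plane occupied by a tree. -/
def unionSet (T : Tree) : Set (ℝ × ℝ) := ⋃ P ∈ T.carrier, P.toSet

/-- The phase plane projection `Π_T` of a (convex) tree. -/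
def proj (T : Tree) (f : ℝ → ℂ) : ℝ → ℂ := piProj T.unionSet f

end Tree

/-- The vertical dilation `2^L S` of a subset of the phase plane. -/
def dilate (L : ℕ) (S : Set (ℝ × ℝ)) : Set (ℝ × ℝ) := (fun q => (q.1, (2:ℝ)^L * q.2)) '' S

/-- The enlarged tree `T^{(L)}` with respect to a frequency `ξ ∈ ω_T`: all bitiles `P` with
`2^L ξ ∈ ω_P` contained in a rectangle `2^L P'` with `P' ∈ T`. -/
def Tree.enlarged (L : ℕ) (T : Tree) (ξ : ℝ) : Set Bitile :=
  {P | (2:ℝ)^L * ξ ∈ P.freqI ∧ ∃ P' ∈ T.carrier, P.toSet ⊆ dilate L P'.toSet}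

/-- The region of the phase plane occupied by the enlarged tree `T^{(L)}`. -/
def Tree.enlargedSet (L : ℕ) (T : Tree) (ξ : ℝ) : Set (ℝ × ℝ) :=
  ⋃ P ∈ T.enlarged L ξ, P.toSet

/-- The left endpoint of `ω_T`, a canonical choice of `ξ ∈ ω_T`. -/
def Tree.xiTop (T : Tree) : ℝ := (2:ℝ)^(1-T.top.k) * T.top.l

/-- The phase plane projection `Π_{T^{(L)}}` of the enlarged tree (independent of the
choice of `ξ ∈ ω_T`; we use the canonical choice).  For `L = 0` this is `Π_T`. -/
def Tree.projL (L : ℕ) (T : Tree) (f : ℝ → ℂ) : ℝ → ℂ := piProj (T.enlargedSet L T.xiTop) f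

/-- `size^{(L)}(PP, f) = sup |I_T|^{-1/2} ‖Π_{T^{(L)}} f‖₂`, the supremum over convex trees
`T ⊆ PP`.  For `L = 0` this is the plain `size(PP, f)`. -/
def size (L : ℕ) (PP : Set Bitile) (f : ℝ → ℂ) : ℝ≥0∞ :=
  ⨆ (T : Tree) (_ : T.carrier ⊆ PP ∧ IsConvex T.carrier),
    (ENNReal.ofReal (Real.sqrt ((2:ℝ)^T.top.k)))⁻¹ * eLpNorm (T.projL L f) 2 volume

/-- The quartile form `Λ_{PP}` restricted to a collection `PP` of bitiles. -/
def quartileFormOn (L : ℕ) (PP : Set Bitile) (f1 f2 f3 : ℝ → ℂ) : ℂ :=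
  ∫ x, ∑' P : PP, (P.1.phid x : ℂ) * projT P.1.u f1 x *
      piProj (dilate L P.1.d.toSet) f2 x * piProj (dilate L P.1.d.toSet) f3 x

/-- The bitiles contained in the strip `ℝ₊ × [0, 2^N)`. -/
def stripBitiles (N : ℕ) : Set Bitile := {P | P.freqI ⊆ Ico (0:ℝ) ((2:ℝ)^N)}

/-- The quartile form `Λ_L` (with frequency truncation parameter `N`). -/
def quartileForm (L N : ℕ) (f1 f2 f3 : ℝ → ℂ) : ℂ :=
  quartileFormOn L (stripBitiles N) f1 f2 f3

/-- The quartile form perturbed by a bounded sequence of coefficients `c_P`. -/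
def quartileFormC (L N : ℕ) (c : Bitile → ℂ) (f1 f2 f3 : ℝ → ℂ) : ℂ :=
  ∫ x, ∑' P : stripBitiles N, c P.1 * (P.1.phid x : ℂ) * projT P.1.u f1 x *
      piProj (dilate L P.1.d.toSet) f2 x * piProj (dilate L P.1.d.toSet) f3 x

/-- The counting function `Σ_{T ∈ 𝕋} 1_{I_T}` of a collection of trees. -/
def countingFn (𝕋 : Set Tree) (x : ℝ) : ℝ≥0∞ :=
  ∑' T : 𝕋, (T.1.top.timeI).indicator (fun _ => (1:ℝ≥0∞)) x

/-- The average of an `ℝ≥0∞`-valued function over a set. -/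
def avgOn (I : Set ℝ) (g : ℝ → ℝ≥0∞) : ℝ≥0∞ := (volume I)⁻¹ * ∫⁻ x in I, g x

/-- The dyadic BMO norm on `[0,∞)` of an `ℝ≥0∞`-valued function. -/
def dyadicBMO (g : ℝ → ℝ≥0∞) : ℝ≥0∞ :=
  ⨆ (k : ℤ) (n : ℕ), avgOn (dyadicI k n)
    (fun x => (g x - avgOn (dyadicI k n) g) + (avgOn (dyadicI k n) g - g x))

/-- The dyadic Hardy-Littlewood maximal function on `[0,∞)`. -/
def dyadicMax (f : ℝ → ℂ) (x : ℝ) : ℝ≥0∞ :=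
  ⨆ (k : ℤ) (n : ℕ) (_ : x ∈ dyadicI k n),
    (volume (dyadicI k n))⁻¹ * ∫⁻ y in dyadicI k n, ‖f y‖₊

/-- The dyadic interval of length `2^j` containing `y ≥ 0`. -/
def freqInterval (j : ℤ) (y : ℝ) : Set ℝ :=
  Ico ((2:ℝ)^j * ⌊y / (2:ℝ)^j⌋) ((2:ℝ)^j * (⌊y / (2:ℝ)^j⌋ + 1))

/-- The projection `Π_l := Π_{I_T × ω_l}`, where `ω_l` is the dyadic interval of
length `2^l` containing the frequency `y`. -/
def PiScale (T : Tree) (j : ℤ) (y : ℝ) (f : ℝ → ℂ) : ℝ → ℂ :=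
  piProj (T.top.timeI ×ˢ freqInterval j y) f

/-- The difference projection `Π_l^Δ = Π_l - Π_{l-1}`. -/
def PiDelta (T : Tree) (j : ℤ) (y : ℝ) (f : ℝ → ℂ) (x : ℝ) : ℂ :=
  PiScale T j y f x - PiScale T (j-1) y f x


private lemma two_zpow_pos (k : ℤ) : (0:ℝ) < 2 ^ k := zpow_pos (by norm_num) k

/-- dyadic interval -/
def DI (k : ℤ) (n : ℕ) : Set ℝ := Ico ((2:ℝ)^k * n) ((2:ℝ)^k * (n+1))

lemma mem_DI {k : ℤ} {n : ℕ} {y : ℝ} : y ∈ DI k n ↔ 0 ≤ y ∧ ⌊y / (2:ℝ)^k⌋₊ = n := by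
  have hp := two_zpow_pos k
  constructor
  · rintro ⟨h1, h2⟩
    have hy : 0 ≤ y := le_trans (by positivity) h1
    refine ⟨hy, ?_⟩
    rw [Nat.floor_eq_iff (by positivity)]
    constructor
    · rw [le_div_iff₀ hp]; nlinarith
    · rw [div_lt_iff₀ hp]; nlinarith
  · rintro ⟨hy, h⟩
    subst h
    have h1 : (⌊y / (2:ℝ)^k⌋₊ : ℝ) ≤ y / 2^k := Nat.floor_le (by positivity)
    have h2 : y / 2^k < ⌊y / (2:ℝ)^k⌋₊ + 1 := Nat.lt_floor_add_one _
    constructor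
    · rw [mul_comm, ← le_div_iff₀ hp]; exact h1
    · rw [mul_comm, ← div_lt_iff₀ hp]; exact h2

lemma DI_left_mem (k : ℤ) (n : ℕ) : (2:ℝ)^k * n ∈ DI k n :=
  ⟨le_refl _, by have := two_zpow_pos k; nlinarith⟩

lemma DI_nonneg {k : ℤ} {n : ℕ} {y : ℝ} (h : y ∈ DI k n) : 0 ≤ y := (mem_DI.mp h).1

lemma floor_scale {k k' : ℤ} (h : k ≤ k') {y : ℝ} (hy : 0 ≤ y) :
    ⌊y / (2:ℝ)^k'⌋₊ = ⌊y / (2:ℝ)^k⌋₊ / 2^(k'-k).toNat := by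
  have h2 : (2:ℝ)^k' = (2:ℝ)^k * ((2^(k'-k).toNat : ℕ) : ℝ) := by
    push_cast
    rw [← zpow_natCast (2:ℝ), Int.toNat_of_nonneg (by omega), ← zpow_add₀ (two_ne_zero)]
    congr 1; ring
  rw [h2, ← div_div, Nat.floor_div_natCast]

lemma DI_unique {k : ℤ} {n n' : ℕ} {y : ℝ} (h1 : y ∈ DI k n) (h2 : y ∈ DI k n') : n = n' := by
  rw [mem_DI] at h1 h2; omega

lemma DI_nested {k k' : ℤ} {n n' : ℕ} (h : k ≤ k') {y : ℝ}
    (h1 : y ∈ DI k n) (h2 : y ∈ DI k' n') : DI k n ⊆ DI k' n' := by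
  intro z hz
  rw [mem_DI] at h1 h2 hz ⊢
  refine ⟨hz.1, ?_⟩
  rw [floor_scale h hz.1, hz.2, ← h1.2, ← floor_scale h h1.1, h2.2]

lemma mem_DI_half {k : ℤ} {l : ℕ} {y : ℝ} :
    y ∈ DI (k+1) l ↔ y ∈ DI k (2*l) ∨ y ∈ DI k (2*l+1) := by
  rw [mem_DI, mem_DI, mem_DI]
  have hs : ∀ z : ℝ, 0 ≤ z → ⌊z / (2:ℝ)^(k+1)⌋₊ = ⌊z / (2:ℝ)^k⌋₊ / 2 := by
    intro z hz
    have := floor_scale (show k ≤ k+1 by omega) hz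
    simpa using this
  constructor
  · rintro ⟨hy, hf⟩
    rw [hs y hy] at hf
    rcases Nat.lt_or_ge (⌊y / (2:ℝ)^k⌋₊ % 2) 1 with h | h
    · exact Or.inl ⟨hy, by omega⟩
    · exact Or.inr ⟨hy, by omega⟩
  · rintro (⟨hy, hf⟩ | ⟨hy, hf⟩) <;> exact ⟨hy, by rw [hs y hy]; omega⟩

lemma DI_subset_iff {k k' : ℤ} {n n' : ℕ} :
    DI k n ⊆ DI k' n' ↔ (2:ℝ)^k' * n' ≤ 2^k * n ∧ (2:ℝ)^k * (n+1) ≤ 2^k' * (n'+1) :=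
  Ico_subset_Ico_iff (by have := two_zpow_pos k; nlinarith)

lemma DI_subset_exp {k k' : ℤ} {n n' : ℕ} (h : DI k n ⊆ DI k' n') : k ≤ k' := by
  rw [DI_subset_iff] at h
  by_contra h'
  have hlt : (2:ℝ)^k' < 2^k := by
    apply zpow_lt_zpow_right₀ (by norm_num) (by omega)
  have hp := two_zpow_pos k; have hp' := two_zpow_pos k'
  obtain ⟨h1, h2⟩ := h
  nlinarith

lemma cross_false {a c : ℤ} {b b' m m' : ℕ} (hb : b < b') (hm : m' < m)
    (h1 : DI a b ⊆ DI c m) (h2 : DI a b' ⊆ DI c m') : False := by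
  rw [DI_subset_iff] at h1 h2
  have ha := two_zpow_pos a; have hc := two_zpow_pos c
  have e1 : (2:ℝ)^c * (↑m' + 1) ≤ 2^c * m := by
    have : (m':ℝ) + 1 ≤ m := by exact_mod_cast hm
    nlinarith
  have e2 : (2:ℝ)^a * b < 2^a * (b' + 1) := by
    have : (b:ℝ) < b' + 1 := by exact_mod_cast Nat.lt_succ_of_lt hb
    nlinarith
  nlinarith [h1.1, h2.2]

lemma halves_nested_false {e e' : ℤ} {l l' : ℕ} (h : e' < e)
    (hu : DI e' (2*l'+1) ⊆ DI e (2*l+1)) (hd : DI e' (2*l') ⊆ DI e (2*l)) : False := by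
  rw [DI_subset_iff] at hu hd
  have heq : (2:ℝ)^e * (2*l+1) = 2^e' * (2*l'+1) := by
    have h1 := hu.1; have h2 := hd.2; push_cast at h1 h2 ⊢; linarith
  obtain ⟨d, hd'⟩ : ∃ d : ℕ, (e - e').toNat = d + 1 := ⟨(e-e').toNat - 1, by omega⟩
  have h2 : (2:ℝ)^e = (2:ℝ)^e' * ((2^(d+1) : ℕ) : ℝ) := by
    push_cast
    rw [← zpow_natCast (2:ℝ) (d+1), ← zpow_add₀ (two_ne_zero)]
    congr 1; omega
  rw [h2, mul_assoc] at heq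
  have hp' := two_zpow_pos e'
  have heq2 : ((2^(d+1) * (2*l+1) : ℕ) : ℝ) = ((2*l'+1 : ℕ) : ℝ) := by
    have := mul_left_cancel₀ (ne_of_gt hp') heq
    push_cast at this ⊢; linarith
  have heqN := Nat.cast_inj (R := ℝ) |>.mp heq2
  have hM : 2 * (2^d * (2*l+1)) = 2*l'+1 := by rw [← heqN]; ring
  omega


/-! ### Bridging lemmas between tiles/bitiles and dyadic intervals -/

lemma bitile_time (P : Bitile) : P.timeI = DI P.k P.n := rfl
lemma bitile_freq (P : Bitile) : P.freqI = DI (1-P.k) P.l := rfl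
lemma tile_time_d (P : Bitile) : P.d.timeI = DI P.k P.n := rfl
lemma tile_time_u (P : Bitile) : P.u.timeI = DI P.k P.n := rfl
lemma tile_freq_d (P : Bitile) : P.d.freqI = DI (-P.k) (2*P.l) := rfl
lemma tile_freq_u (P : Bitile) : P.u.freqI = DI (-P.k) (2*P.l+1) := rfl

lemma mem_bitile_freq {P : Bitile} {y : ℝ} :
    y ∈ P.freqI ↔ y ∈ P.d.freqI ∨ y ∈ P.u.freqI := by
  rw [bitile_freq, tile_freq_d, tile_freq_u, show (1:ℤ)-P.k = -P.k+1 by ring, mem_DI_half]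

lemma d_freq_subset (P : Bitile) : P.d.freqI ⊆ P.freqI :=
  fun _ hz => mem_bitile_freq.mpr (Or.inl hz)

lemma u_freq_subset (P : Bitile) : P.u.freqI ⊆ P.freqI :=
  fun _ hz => mem_bitile_freq.mpr (Or.inr hz)

lemma d_subset (P : Bitile) : P.d.toSet ⊆ P.toSet :=
  fun _ hz => ⟨hz.1, d_freq_subset P hz.2⟩

lemma u_subset (P : Bitile) : P.u.toSet ⊆ P.toSet :=
  fun _ hz => ⟨hz.1, u_freq_subset P hz.2⟩

/-- The unique bitile of scale `j` containing the point `(x,y)` of the phase plane. -/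
def Qb (x y : ℝ) (j : ℤ) : Bitile := ⟨j, ⌊x / (2:ℝ)^j⌋₊, ⌊y / (2:ℝ)^(1-j)⌋₊⟩

lemma mem_Qb {x y : ℝ} (hx : 0 ≤ x) (hy : 0 ≤ y) (j : ℤ) : (x, y) ∈ (Qb x y j).toSet :=
  ⟨mem_DI.mpr ⟨hx, rfl⟩, mem_DI.mpr ⟨hy, rfl⟩⟩

lemma Qb_eq {x y : ℝ} {P : Bitile} (h : (x,y) ∈ P.toSet) : Qb x y P.k = P := by
  obtain ⟨hx, hy⟩ := h
  rw [bitile_time] at hx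
  rw [bitile_freq] at hy
  have h1 := (mem_DI.mp hx).2
  have h2 := (mem_DI.mp hy).2
  cases P with
  | mk k n l => simpa [Qb] using ⟨h1, h2⟩

/-! ### Disjointness lemmas -/

lemma disj_topu_topd (T : Tree) : Disjoint (Tile.toSet T.top.u) (Tile.toSet T.top.d) := by
  rw [Set.disjoint_left]; rintro ⟨x,y⟩ h1 h2
  have a1 : y ∈ DI (-T.top.k) (2*T.top.l+1) := by
    have := h1.2; rwa [tile_freq_u] at this
  have a2 : y ∈ DI (-T.top.k) (2*T.top.l) := by
    have := h2.2; rwa [tile_freq_d] at this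
  have := DI_unique a1 a2; omega

lemma disj_top_Tu (T : Tree) {t : Tile} (ht : t.freqI ⊆ T.top.freqI) {P : Bitile}
    (hP : P ∈ T.Tu) : Disjoint t.toSet P.d.toSet := by
  rw [Set.disjoint_left]; rintro ⟨x,y⟩ h1 h2
  have a1 : y ∈ DI (-P.k) (2*P.l+1) := by
    have := hP.2 (ht h1.2); rwa [tile_freq_u] at this
  have a2 : y ∈ DI (-P.k) (2*P.l) := by
    have := h2.2; rwa [tile_freq_d] at this
  have := DI_unique a1 a2; omega

lemma disj_top_Td (T : Tree) {t : Tile} (ht : t.freqI ⊆ T.top.freqI) {P : Bitile}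
    (hP : P ∈ T.Td) : Disjoint t.toSet P.u.toSet := by
  rw [Set.disjoint_left]; rintro ⟨x,y⟩ h1 h2
  have a1 : y ∈ DI (-P.k) (2*P.l) := by
    have := hP.2 (ht h1.2); rwa [tile_freq_d] at this
  have a2 : y ∈ DI (-P.k) (2*P.l+1) := by
    have := h2.2; rwa [tile_freq_u] at this
  have := DI_unique a1 a2; omega

lemma xi_mem (T : Tree) : (2:ℝ)^(1-T.top.k) * T.top.l ∈ T.top.freqI := by
  rw [bitile_freq]; exact DI_left_mem _ _

lemma disj_Tu_Tu (T : Tree) {P P' : Bitile} (hP : P ∈ T.Tu) (hP' : P' ∈ T.Tu)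
    (hne : P.d ≠ P'.d) : Disjoint P.d.toSet P'.d.toSet := by
  rw [Set.disjoint_left]; rintro ⟨x,y⟩ h1 h2
  have hy1 : y ∈ DI (-P.k) (2*P.l) := by have := h1.2; rwa [tile_freq_d] at this
  have hy2 : y ∈ DI (-P'.k) (2*P'.l) := by have := h2.2; rwa [tile_freq_d] at this
  have hx1 : x ∈ DI P.k P.n := by have := h1.1; rwa [tile_time_d] at this
  have hx2 : x ∈ DI P'.k P'.n := by have := h2.1; rwa [tile_time_d] at this
  have hξ1 : (2:ℝ)^(1-T.top.k) * T.top.l ∈ DI (-P.k) (2*P.l+1) := by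
    have := hP.2 (xi_mem T); rwa [tile_freq_u] at this
  have hξ2 : (2:ℝ)^(1-T.top.k) * T.top.l ∈ DI (-P'.k) (2*P'.l+1) := by
    have := hP'.2 (xi_mem T); rwa [tile_freq_u] at this
  rcases lt_trichotomy P.k P'.k with h | h | h
  · exact halves_nested_false (show -P'.k < -P.k by omega)
      (DI_nested (show -P'.k ≤ -P.k by omega) hξ2 hξ1)
      (DI_nested (show -P'.k ≤ -P.k by omega) hy2 hy1)
  · apply hne
    rw [h] at hy1 hx1
    have e1 := DI_unique hy1 hy2
    have e2 := DI_unique hx1 hx2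
    rw [Bitile.d, Bitile.d, h, e1, e2]
  · exact halves_nested_false (show -P.k < -P'.k by omega)
      (DI_nested (show -P.k ≤ -P'.k by omega) hξ1 hξ2)
      (DI_nested (show -P.k ≤ -P'.k by omega) hy1 hy2)

lemma disj_Td_Td (T : Tree) {P P' : Bitile} (hP : P ∈ T.Td) (hP' : P' ∈ T.Td)
    (hne : P.u ≠ P'.u) : Disjoint P.u.toSet P'.u.toSet := by
  rw [Set.disjoint_left]; rintro ⟨x,y⟩ h1 h2
  have hy1 : y ∈ DI (-P.k) (2*P.l+1) := by have := h1.2; rwa [tile_freq_u] at this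
  have hy2 : y ∈ DI (-P'.k) (2*P'.l+1) := by have := h2.2; rwa [tile_freq_u] at this
  have hx1 : x ∈ DI P.k P.n := by have := h1.1; rwa [tile_time_u] at this
  have hx2 : x ∈ DI P'.k P'.n := by have := h2.1; rwa [tile_time_u] at this
  have hξ1 : (2:ℝ)^(1-T.top.k) * T.top.l ∈ DI (-P.k) (2*P.l) := by
    have := hP.2 (xi_mem T); rwa [tile_freq_d] at this
  have hξ2 : (2:ℝ)^(1-T.top.k) * T.top.l ∈ DI (-P'.k) (2*P'.l) := by
    have := hP'.2 (xi_mem T); rwa [tile_freq_d] at this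
  rcases lt_trichotomy P.k P'.k with h | h | h
  · exact halves_nested_false (show -P'.k < -P.k by omega)
      (DI_nested (show -P'.k ≤ -P.k by omega) hy2 hy1)
      (DI_nested (show -P'.k ≤ -P.k by omega) hξ2 hξ1)
  · apply hne
    rw [h] at hy1 hx1
    have e1 := DI_unique hy1 hy2
    have e2 := DI_unique hx1 hx2
    rw [Bitile.u, Bitile.u, h, e2]
    have : P.l = P'.l := by omega
    rw [this]
  · exact halves_nested_false (show -P.k < -P'.k by omega)
      (DI_nested (show -P.k ≤ -P'.k by omega) hy1 hy2)
      (DI_nested (show -P.k ≤ -P'.k by omega) hξ1 hξ2)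

lemma disj_Tu_Td (T : Tree) {P P' : Bitile} (hP : P ∈ T.Tu) (hP' : P' ∈ T.Td) :
    Disjoint P.d.toSet P'.u.toSet := by
  rw [Set.disjoint_left]; rintro ⟨x,y⟩ h1 h2
  have hy1 : y ∈ DI (-P.k) (2*P.l) := by have := h1.2; rwa [tile_freq_d] at this
  have hy2 : y ∈ DI (-P'.k) (2*P'.l+1) := by have := h2.2; rwa [tile_freq_u] at this
  have hξ1 : (2:ℝ)^(1-T.top.k) * T.top.l ∈ DI (-P.k) (2*P.l+1) := by
    have := hP.2 (xi_mem T); rwa [tile_freq_u] at this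
  have hξ2 : (2:ℝ)^(1-T.top.k) * T.top.l ∈ DI (-P'.k) (2*P'.l) := by
    have := hP'.2 (xi_mem T); rwa [tile_freq_d] at this
  rcases le_or_gt P.k P'.k with h | h
  · exact cross_false (Nat.lt_succ_self (2*P'.l)) (Nat.lt_succ_self (2*P.l))
      (DI_nested (show -P'.k ≤ -P.k by omega) hξ2 hξ1)
      (DI_nested (show -P'.k ≤ -P.k by omega) hy2 hy1)
  · exact cross_false (Nat.lt_succ_self (2*P.l)) (Nat.lt_succ_self (2*P'.l))
      (DI_nested (show -P.k ≤ -P'.k by omega) hy1 hy2)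
      (DI_nested (show -P.k ≤ -P'.k by omega) hξ1 hξ2)

/-- The canonical tiling of a convex tree: `⋃_{P ∈ T} P` is the disjoint union of
`(P_T)_u`, `(P_T)_d`, the tiles `P_d` for `P ∈ T_u`, and the tiles `P_u` for `P ∈ T_d`. -/
theorem tree_tiling :
    ∀ T : Tree, IsConvex T.carrier →
      (⋃ P ∈ T.carrier, Bitile.toSet P) =
        T.top.u.toSet ∪ T.top.d.toSet ∪ (⋃ P ∈ T.Tu, (Bitile.d P).toSet) ∪
          (⋃ P ∈ T.Td, (Bitile.u P).toSet) ∧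
      Set.PairwiseDisjoint
        (({T.top.u, T.top.d} ∪ (Bitile.d '' T.Tu) ∪ (Bitile.u '' T.Td) : Set Tile))
        Tile.toSet := by
  intro T hconv
  constructor
  · ext z
    obtain ⟨x, y⟩ := z
    simp only [Set.mem_iUnion, Set.mem_union, exists_prop]
    constructor
    · rintro ⟨P, hP, hzP⟩
      have hx := hzP.1
      have hy := hzP.2
      have hle := T.le_top P hP
      have hx0 : 0 ≤ x := DI_nonneg (show x ∈ DI P.k P.n by rwa [bitile_time] at hx)
      have hy0 : 0 ≤ y := DI_nonneg (show y ∈ DI (1-P.k) P.l by rwa [bitile_freq] at hy)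
      by_cases hytop : y ∈ T.top.freqI
      · rcases mem_bitile_freq.mp hytop with h | h
        · exact Or.inl (Or.inl (Or.inr ⟨hle.1 hx, h⟩))
        · exact Or.inl (Or.inl (Or.inl ⟨hle.1 hx, h⟩))
      · suffices hS : (∃ Q, Q ∈ T.Tu ∧ (x,y) ∈ Q.d.toSet) ∨
            (∃ Q, Q ∈ T.Td ∧ (x,y) ∈ Q.u.toSet) by
          rcases hS with ⟨Q, hQ, hm⟩ | ⟨Q, hQ, hm⟩
          · exact Or.inl (Or.inr ⟨Q, hQ, hm⟩)
          · exact Or.inr ⟨Q, hQ, hm⟩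
        have hfreq : DI (1-T.top.k) T.top.l ⊆ DI (1-P.k) P.l := by
          have := hle.2; rwa [bitile_freq, bitile_freq] at this
        have hyP : y ∈ DI (1-P.k) P.l := by rwa [bitile_freq] at hy
        have hxP : x ∈ DI P.k P.n := by rwa [bitile_time] at hx
        have hxtop : x ∈ DI T.top.k T.top.n := by
          have := hle.1 hx; rwa [bitile_time] at this
        have hkK : P.k ≤ T.top.k := by have := DI_subset_exp hfreq; omega
        have step : ∀ j : ℤ, P.k ≤ j → j < T.top.k →
            T.top.freqI ⊆ (Qb x y j).freqI → ¬ (T.top.freqI ⊆ (Qb x y (j+1)).freqI) →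
            (∃ Q, Q ∈ T.Tu ∧ (x,y) ∈ Q.d.toSet) ∨
              (∃ Q, Q ∈ T.Td ∧ (x,y) ∈ Q.u.toSet) := by
          intro j hj1 hj2 hpj hnpj
          have hzQ := mem_Qb hx0 hy0 j
          have hzQ1 : x ∈ DI j (Qb x y j).n := mem_DI.mpr ⟨hx0, rfl⟩
          have hzQ2 : y ∈ DI (1-j) (Qb x y j).l := mem_DI.mpr ⟨hy0, rfl⟩
          have hQk : (Qb x y j).k = j := rfl
          have hQcar : Qb x y j ∈ T.carrier := by
            by_cases hjP : j = P.k
            · subst hjP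
              rw [Qb_eq ⟨hx, hy⟩]
              exact hP
            · have hPQ : bitileLT P (Qb x y j) := by
                refine ⟨⟨?_, ?_⟩, ?_⟩
                · rw [bitile_time, bitile_time, hQk]
                  exact DI_nested (by omega) hxP hzQ1
                · rw [bitile_freq, bitile_freq, hQk]
                  exact DI_nested (by omega) hzQ2 hyP
                · intro he
                  exact hjP (congrArg Bitile.k he).symm
              have hQT : bitileLT (Qb x y j) T.top := by
                refine ⟨⟨?_, hpj⟩, ?_⟩
                · rw [bitile_time, bitile_time, hQk]
                  exact DI_nested (le_of_lt hj2) hzQ1 hxtop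
                · intro he
                  have := congrArg Bitile.k he
                  rw [hQk] at this
                  omega
              exact hconv P T.top (Qb x y j) hP T.top_mem hPQ hQT
          have hyQ : y ∈ (Qb x y j).d.freqI ∨ y ∈ (Qb x y j).u.freqI :=
            mem_bitile_freq.mp hzQ.2
          have hξtop : (2:ℝ)^(1-T.top.k) * T.top.l ∈ DI (1-T.top.k) T.top.l :=
            DI_left_mem _ _
          have hξQ : (2:ℝ)^(1-T.top.k) * T.top.l ∈ (Qb x y j).freqI := hpj (xi_mem T)
          have hξhalf := mem_bitile_freq.mp hξQ
          have hexp : 1 - T.top.k ≤ -j := by omega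
          have hcontra : ∀ m : ℕ, y ∈ DI (-j) m →
              (2:ℝ)^(1-T.top.k) * T.top.l ∈ DI (-j) m → False := by
            intro m hym hξm
            apply hnpj
            have hsub : T.top.freqI ⊆ DI (-j) m := by
              rw [bitile_freq]; exact DI_nested hexp hξtop hξm
            have hy' : y ∈ DI (1-(j+1)) (Qb x y (j+1)).l := mem_DI.mpr ⟨hy0, rfl⟩
            rw [show (1:ℤ)-(j+1) = -j by ring] at hy'
            have he := DI_unique hy' hym
            show T.top.freqI ⊆ DI (1-(j+1)) (Qb x y (j+1)).l
            rw [show (1:ℤ)-(j+1) = -j by ring, he]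
            exact hsub
          rcases hyQ with hyd | hyu
          · rcases hξhalf with hξd | hξu
            · exact absurd (hcontra _
                (show y ∈ DI (-j) (2*(Qb x y j).l) by rwa [tile_freq_d, hQk] at hyd)
                (show _ ∈ DI (-j) (2*(Qb x y j).l) by rwa [tile_freq_d, hQk] at hξd)) not_false
            · refine Or.inl ⟨Qb x y j, ⟨hQcar, ?_⟩, ⟨hzQ.1, hyd⟩⟩
              rw [bitile_freq, tile_freq_u, hQk]
              exact DI_nested hexp hξtop
                (show _ ∈ DI (-j) (2*(Qb x y j).l+1) by rwa [tile_freq_u, hQk] at hξu)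
          · rcases hξhalf with hξd | hξu
            · refine Or.inr ⟨Qb x y j, ⟨hQcar, ?_⟩, ⟨hzQ.1, hyu⟩⟩
              rw [bitile_freq, tile_freq_d, hQk]
              exact DI_nested hexp hξtop
                (show _ ∈ DI (-j) (2*(Qb x y j).l) by rwa [tile_freq_d, hQk] at hξd)
            · exact absurd (hcontra _
                (show y ∈ DI (-j) (2*(Qb x y j).l+1) by rwa [tile_freq_u, hQk] at hyu)
                (show _ ∈ DI (-j) (2*(Qb x y j).l+1) by rwa [tile_freq_u, hQk] at hξu)) not_false
        have main : ∀ i : ℕ, ∀ j : ℤ, P.k ≤ j → j + i = T.top.k →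
            T.top.freqI ⊆ (Qb x y j).freqI →
            (∃ Q, Q ∈ T.Tu ∧ (x,y) ∈ Q.d.toSet) ∨
              (∃ Q, Q ∈ T.Td ∧ (x,y) ∈ Q.u.toSet) := by
          intro i
          induction i with
          | zero =>
            intro j hj1 hj2 hpj
            exfalso
            have hj : j = T.top.k := by omega
            subst hj
            apply hytop
            have h1 : (2:ℝ)^(1-T.top.k) * T.top.l ∈ DI (1-T.top.k) T.top.l :=
              DI_left_mem _ _
            have h2 : (2:ℝ)^(1-T.top.k) * T.top.l
                ∈ DI (1-T.top.k) (Qb x y T.top.k).l := by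
              have := hpj (xi_mem T)
              rwa [bitile_freq] at this
            have h3 := DI_unique h1 h2
            have h4 : y ∈ DI (1-T.top.k) (Qb x y T.top.k).l := mem_DI.mpr ⟨hy0, rfl⟩
            rw [← h3] at h4
            rw [bitile_freq]
            exact h4
          | succ i ih =>
            intro j hj1 hj2 hpj
            by_cases hp' : T.top.freqI ⊆ (Qb x y (j+1)).freqI
            · exact ih (j+1) (by omega) (by omega) hp'
            · exact step j hj1 (by omega) hpj hp'
        have hpredP : T.top.freqI ⊆ (Qb x y P.k).freqI := by
          rw [Qb_eq ⟨hx, hy⟩]; exact hle.2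
        exact main (T.top.k - P.k).toNat P.k le_rfl (by omega) hpredP
    · rintro ((((⟨hx1, hy1⟩ | ⟨hx1, hy1⟩) | ⟨Q, hQ, hm⟩) | ⟨Q, hQ, hm⟩))
      · exact ⟨T.top, T.top_mem, hx1, u_freq_subset _ hy1⟩
      · exact ⟨T.top, T.top_mem, hx1, d_freq_subset _ hy1⟩
      · exact ⟨Q, hQ.1, d_subset Q hm⟩
      · exact ⟨Q, hQ.1, u_subset Q hm⟩
  · rintro p hp q hq hpq
    simp only [Set.mem_union, Set.mem_insert_iff, Set.mem_singleton_iff,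
      Set.mem_image] at hp hq
    rcases hp with ((hp | hp) | ⟨P, hPm, rfl⟩) | ⟨P, hPm, rfl⟩ <;>
      rcases hq with ((hq | hq) | ⟨Q, hQm, rfl⟩) | ⟨Q, hQm, rfl⟩ <;>
      subst_vars
    · exact absurd rfl hpq
    · exact disj_topu_topd T
    · exact disj_top_Tu T (u_freq_subset _) hQm
    · exact disj_top_Td T (u_freq_subset _) hQm
    · exact (disj_topu_topd T).symm
    · exact absurd rfl hpq
    · exact disj_top_Tu T (d_freq_subset _) hQm
    · exact disj_top_Td T (d_freq_subset _) hQm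
    · exact (disj_top_Tu T (u_freq_subset _) hPm).symm
    · exact (disj_top_Tu T (d_freq_subset _) hPm).symm
    · exact disj_Tu_Tu T hPm hQm hpq
    · exact disj_Tu_Td T hPm hQm
    · exact (disj_top_Td T (u_freq_subset _) hPm).symm
    · exact (disj_top_Td T (d_freq_subset _) hPm).symm
    · exact (disj_Tu_Td T hQm hPm).symm
    · exact disj_Td_Td T hPm hQm hpq

end Quartile
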